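/- The two-sided negativity of quantumness is faithful: for every bipartite state ρ on ℂ^m ⊗ ℂ^n, Q_N^{AB}(ρ) = 0 if and only if there exist an m×m unitary U and an n×n unitary V such that (U ⊗ V)† ρ (U ⊗ V) is a diagonal matrix, i.e., if and only if ρ is classical-classical. -/

import Mathlib

open scoped Kronecker ComplexOrder
open Matrix

/-- The positive semidefinite square root, as `Matrix.PosSemidef.sqrt` was defined in the older Mathlib. -/
noncomputable def psdSqrt {n : Type*} [Fintype n] [DecidableEq n] {A : Matrix n n ℂ}
    (hA : A.PosSemidef) : Matrix n n ℂ :=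
  hA.1.eigenvectorUnitary.1 * diagonal ((↑) ∘ (√·) ∘ hA.1.eigenvalues) *
    (star hA.1.eigenvectorUnitary : Matrix n n ℂ)

noncomputable def traceNorm {ι : Type*} [Fintype ι] [DecidableEq ι] (A : Matrix ι ι ℂ) : ℝ :=
  ((psdSqrt (Matrix.posSemidef_conjTranspose_mul_self A)).trace).re

noncomputable def l1Norm {ι κ : Type*} [Fintype ι] [Fintype κ] (A : Matrix ι κ ℂ) : ℝ :=
  ∑ i, ∑ j, ‖A i j‖

def ptranspose {α β : Type*} (ρ : Matrix (α × β) (α × β) ℂ) : Matrix (α × β) (α × β) ℂ :=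
  Matrix.of fun p q => ρ (p.1, q.2) (q.1, p.2)

noncomputable def negativity {α β : Type*} [Fintype α] [Fintype β] [DecidableEq α] [DecidableEq β]
    (ρ : Matrix (α × β) (α × β) ℂ) : ℝ :=
  (traceNorm (ptranspose ρ) - 1) / 2

def matUnit {ι : Type*} [DecidableEq ι] (i j : ι) : Matrix ι ι ℂ :=
  Matrix.single i j 1

noncomputable def mcs {n : ℕ} (t : Fin n → Fin n → ℂ) :
    Matrix (Fin n × Fin n) (Fin n × Fin n) ℂ :=
  ∑ i, ∑ j, t i j • (matUnit i j ⊗ₖ matUnit i j)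

def blockOf {m n : ℕ} (ρ : Matrix (Fin m × Fin n) (Fin m × Fin n) ℂ) (i j : Fin m) :
    Matrix (Fin n) (Fin n) ℂ :=
  Matrix.of fun k l => ρ (i, k) (j, l)

noncomputable def conjU {m n : ℕ} (U : Matrix.unitaryGroup (Fin m) ℂ)
    (ρ : Matrix (Fin m × Fin n) (Fin m × Fin n) ℂ) : Matrix (Fin m × Fin n) (Fin m × Fin n) ℂ :=
  ((U : Matrix (Fin m) (Fin m) ℂ) ⊗ₖ (1 : Matrix (Fin n) (Fin n) ℂ))ᴴ * ρ *
    ((U : Matrix (Fin m) (Fin m) ℂ) ⊗ₖ (1 : Matrix (Fin n) (Fin n) ℂ))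

noncomputable def conjUV {m n : ℕ} (U : Matrix.unitaryGroup (Fin m) ℂ)
    (V : Matrix.unitaryGroup (Fin n) ℂ)
    (ρ : Matrix (Fin m × Fin n) (Fin m × Fin n) ℂ) : Matrix (Fin m × Fin n) (Fin m × Fin n) ℂ :=
  ((U : Matrix (Fin m) (Fin m) ℂ) ⊗ₖ (V : Matrix (Fin n) (Fin n) ℂ))ᴴ * ρ *
    ((U : Matrix (Fin m) (Fin m) ℂ) ⊗ₖ (V : Matrix (Fin n) (Fin n) ℂ))

noncomputable def QNA {m n : ℕ} (ρ : Matrix (Fin m × Fin n) (Fin m × Fin n) ℂ) : ℝ :=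
  ⨅ U : Matrix.unitaryGroup (Fin m) ℂ,
    ((∑ i, ∑ j, traceNorm (blockOf (conjU U ρ) i j)) - 1) / 2

noncomputable def QNAB {m n : ℕ} (ρ : Matrix (Fin m × Fin n) (Fin m × Fin n) ℂ) : ℝ :=
  ⨅ U : Matrix.unitaryGroup (Fin m) ℂ, ⨅ V : Matrix.unitaryGroup (Fin n) ℂ,
    (l1Norm (conjUV U V ρ) - 1) / 2

section Aux

open Finset

lemma kron_conjTranspose {m n : ℕ} (A : Matrix (Fin m) (Fin m) ℂ) (B : Matrix (Fin n) (Fin n) ℂ) :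
    (A ⊗ₖ B)ᴴ = Aᴴ ⊗ₖ Bᴴ := by
  ext ⟨i, k⟩ ⟨j, l⟩
  simp [Matrix.kroneckerMap_apply, Matrix.conjTranspose_apply, mul_comm]

lemma kron_unitary {m n : ℕ} (U : Matrix.unitaryGroup (Fin m) ℂ)
    (V : Matrix.unitaryGroup (Fin n) ℂ) :
    ((U : Matrix (Fin m) (Fin m) ℂ) ⊗ₖ (V : Matrix (Fin n) (Fin n) ℂ)) ∈
      Matrix.unitaryGroup (Fin m × Fin n) ℂ := by
  have hU1 : (U : Matrix (Fin m) (Fin m) ℂ)ᴴ * U = 1 := Matrix.UnitaryGroup.star_mul_self U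
  have hU2 : (U : Matrix (Fin m) (Fin m) ℂ) * (U : Matrix (Fin m) (Fin m) ℂ)ᴴ = 1 :=
    mul_eq_one_comm.mp hU1
  have hV1 : (V : Matrix (Fin n) (Fin n) ℂ)ᴴ * V = 1 := Matrix.UnitaryGroup.star_mul_self V
  have hV2 : (V : Matrix (Fin n) (Fin n) ℂ) * (V : Matrix (Fin n) (Fin n) ℂ)ᴴ = 1 :=
    mul_eq_one_comm.mp hV1
  constructor
  · show _ᴴ * _ = 1
    rw [kron_conjTranspose, ← Matrix.mul_kronecker_mul, hU1, hV1, Matrix.one_kronecker_one]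
  · show _ * _ᴴ = 1
    rw [kron_conjTranspose, ← Matrix.mul_kronecker_mul, hU2, hV2, Matrix.one_kronecker_one]

lemma diag_nonneg' {ι : Type*} [Fintype ι] [DecidableEq ι] {σ : Matrix ι ι ℂ}
    (h : σ.PosSemidef) (p : ι) : 0 ≤ σ p p := by
  exact h.diag_nonneg

lemma l1Norm_eq {ι : Type*} [Fintype ι] [DecidableEq ι] {σ : Matrix ι ι ℂ}
    (h : σ.PosSemidef) (htr : σ.trace = 1) :
    l1Norm σ = 1 + ∑ p, ∑ q, (if q = p then 0 else ‖σ p q‖) := by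
  have hdiag : ∀ p, (‖σ p p‖ : ℝ) = (σ p p).re := by
    intro p
    have h0 := diag_nonneg' h p
    rw [Complex.nonneg_iff] at h0
    rw [Complex.norm_def, Complex.normSq_apply, ← h0.2, mul_zero, add_zero,
      Real.sqrt_mul_self h0.1]
  have hsum : ∑ p, (‖σ p p‖ : ℝ) = 1 := by
    have : (σ.trace).re = 1 := by rw [htr]; simp
    rw [← this, Matrix.trace, Complex.re_sum]
    exact Finset.sum_congr rfl fun p _ => hdiag p
  calc l1Norm σ = ∑ p, ∑ q, ((if q = p then ‖σ p p‖ else 0)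
        + (if q = p then 0 else ‖σ p q‖)) := by
        refine Finset.sum_congr rfl fun p _ => Finset.sum_congr rfl fun q _ => ?_
        by_cases hq : q = p <;> simp [hq]
    _ = 1 + ∑ p, ∑ q, (if q = p then 0 else ‖σ p q‖) := by
        simp only [Finset.sum_add_distrib]
        rw [← hsum]
        congr 1
        refine Finset.sum_congr rfl fun p _ => ?_
        simp

lemma entry_bound {k : ℕ} {U : Matrix (Fin k) (Fin k) ℂ}
    (hU : U ∈ Matrix.unitaryGroup (Fin k) ℂ) (i j : Fin k) : ‖U i j‖ ≤ 1 := by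
  have h1 : (U * Uᴴ) i i = 1 := by
    rw [show U * Uᴴ = 1 from Matrix.mem_unitaryGroup_iff.mp hU]
    simp
  have h2 : ∑ l, Complex.normSq (U i l) = 1 := by
    have := congrArg Complex.re h1
    simpa [Matrix.mul_apply, Complex.mul_conj, Complex.re_sum] using this
  have h3 : Complex.normSq (U i j) ≤ 1 := by
    rw [← h2]
    exact Finset.single_le_sum (fun l _ => Complex.normSq_nonneg _) (Finset.mem_univ j)
  have := Real.sqrt_le_sqrt h3
  simpa [Complex.norm_def] using this

lemma isCompact_unitaryGroup {k : ℕ} :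
    IsCompact (Matrix.unitaryGroup (Fin k) ℂ : Set (Matrix (Fin k) (Fin k) ℂ)) := by
  have hsub : (Matrix.unitaryGroup (Fin k) ℂ : Set (Matrix (Fin k) (Fin k) ℂ)) ⊆
      Set.univ.pi (fun _ : Fin k => Set.univ.pi fun _ : Fin k => Metric.closedBall (0 : ℂ) 1) := by
    intro U hU i _ j _
    simpa [Complex.dist_eq] using entry_bound hU i j
  have hK : IsCompact (Set.univ.pi (fun _ : Fin k =>
      Set.univ.pi fun _ : Fin k => Metric.closedBall (0 : ℂ) 1)) :=
    isCompact_univ_pi fun _ => isCompact_univ_pi fun _ => ProperSpace.isCompact_closedBall _ _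
  refine hK.of_isClosed_subset ?_ hsub
  have hc1 : Continuous fun M : Matrix (Fin k) (Fin k) ℂ => star M * M :=
    (continuous_id.matrix_conjTranspose).matrix_mul continuous_id
  have hc2 : Continuous fun M : Matrix (Fin k) (Fin k) ℂ => M * star M :=
    continuous_id.matrix_mul (continuous_id.matrix_conjTranspose)
  have heq : (Matrix.unitaryGroup (Fin k) ℂ : Set (Matrix (Fin k) (Fin k) ℂ)) =
      ((fun M => star M * M) ⁻¹' {1}) ∩ ((fun M => M * star M) ⁻¹' {1}) := by
    ext M
    simp [Unitary.mem_iff, Set.mem_inter_iff]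
  rw [heq]
  exact ((isClosed_singleton.preimage hc1).inter (isClosed_singleton.preimage hc2))

end Aux

/-- faithfulness of the two-sided negativity of quantumness: it vanishes
iff the state is diagonal in some local product basis (classical-classical). -/
theorem stmt_18 {m n : ℕ} (ρ : Matrix (Fin m × Fin n) (Fin m × Fin n) ℂ)
    (hpos : ρ.PosSemidef) (htr : ρ.trace = 1) :
    QNAB ρ = 0 ↔ ∃ (U : Matrix.unitaryGroup (Fin m) ℂ) (V : Matrix.unitaryGroup (Fin n) ℂ),
      ∀ p q, p ≠ q → conjUV U V ρ p q = 0 :=  by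
  classical
  set g : Matrix.unitaryGroup (Fin m) ℂ × Matrix.unitaryGroup (Fin n) ℂ → ℝ :=
    fun p => (l1Norm (conjUV p.1 p.2 ρ) - 1) / 2 with hg
  -- basic properties of conjugated states
  have hPSD : ∀ U V, (conjUV U V ρ : Matrix (Fin m × Fin n) (Fin m × Fin n) ℂ).PosSemidef :=
    fun U V => hpos.conjTranspose_mul_mul_same _
  have htr' : ∀ (U : Matrix.unitaryGroup (Fin m) ℂ) (V : Matrix.unitaryGroup (Fin n) ℂ),
      (conjUV U V ρ).trace = 1 := by
    intro U V
    have hWW : ((U : Matrix (Fin m) (Fin m) ℂ) ⊗ₖ (V : Matrix (Fin n) (Fin n) ℂ)) *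
        ((U : Matrix (Fin m) (Fin m) ℂ) ⊗ₖ (V : Matrix (Fin n) (Fin n) ℂ))ᴴ = 1 :=
      (kron_unitary U V).2
    unfold conjUV
    rw [Matrix.trace_mul_comm, ← mul_assoc, hWW, one_mul, htr]
  have hkey : ∀ U V, l1Norm (conjUV U V ρ) =
      1 + ∑ p, ∑ q, (if q = p then 0 else ‖conjUV U V ρ p q‖) :=
    fun U V => l1Norm_eq (hPSD U V) (htr' U V)
  have hoff_nonneg : ∀ (U : Matrix.unitaryGroup (Fin m) ℂ) (V : Matrix.unitaryGroup (Fin n) ℂ),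
      (0:ℝ) ≤ ∑ p, ∑ q, (if q = p then 0 else ‖conjUV U V ρ p q‖) := by
    intro U V
    refine Finset.sum_nonneg fun p _ => Finset.sum_nonneg fun q _ => ?_
    split <;> positivity
  have hnonneg : ∀ p, (0:ℝ) ≤ g p := by
    rintro ⟨U, V⟩
    simp only [hg]
    have := hoff_nonneg U V
    rw [hkey U V]
    linarith
  have hzero : ∀ (U : Matrix.unitaryGroup (Fin m) ℂ) (V : Matrix.unitaryGroup (Fin n) ℂ),
      g (U, V) = 0 ↔ ∀ p q, p ≠ q → conjUV U V ρ p q = 0 := by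
    intro U V
    simp only [hg]
    rw [hkey U V]
    constructor
    · intro h0 p q hpq
      have hS : ∑ p, ∑ q, (if q = p then 0 else ‖conjUV U V ρ p q‖) = 0 := by
        linarith [hoff_nonneg U V, (by linarith : (1 + ∑ p, ∑ q, (if q = p then 0 else
          ‖conjUV U V ρ p q‖) - 1) = 0)]
      have h1 := (Finset.sum_eq_zero_iff_of_nonneg fun p _ =>
        Finset.sum_nonneg fun q _ => by split <;> positivity).mp hS p (Finset.mem_univ p)
      have h2 := (Finset.sum_eq_zero_iff_of_nonneg fun q _ => by
        split <;> positivity).mp h1 q (Finset.mem_univ q)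
      rw [if_neg (fun h : q = p => hpq h.symm)] at h2
      exact norm_eq_zero.mp h2
    · intro hz
      have : ∀ p ∈ Finset.univ, ∑ q, (if q = p then 0 else
          ‖conjUV U V ρ p q‖) = 0 := by
        intro p _
        refine Finset.sum_eq_zero fun q _ => ?_
        by_cases hq : q = p
        · simp [hq]
        · rw [if_neg hq, hz p q (fun h => hq h.symm)]
          simp
      rw [Finset.sum_eq_zero this]
      ring
  -- compactness / continuity: the infimum is attained
  haveI hc1 : CompactSpace (Matrix.unitaryGroup (Fin m) ℂ) :=
    isCompact_iff_compactSpace.mp isCompact_unitaryGroup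
  haveI hc2 : CompactSpace (Matrix.unitaryGroup (Fin n) ℂ) :=
    isCompact_iff_compactSpace.mp isCompact_unitaryGroup
  haveI hne1 : Nonempty (Matrix.unitaryGroup (Fin m) ℂ) := ⟨1⟩
  haveI hne2 : Nonempty (Matrix.unitaryGroup (Fin n) ℂ) := ⟨1⟩
  have hW : Continuous fun p : Matrix.unitaryGroup (Fin m) ℂ × Matrix.unitaryGroup (Fin n) ℂ =>
      ((p.1 : Matrix (Fin m) (Fin m) ℂ) ⊗ₖ (p.2 : Matrix (Fin n) (Fin n) ℂ)) := by
    refine continuous_matrix fun i j => ?_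
    exact (((continuous_subtype_val.comp continuous_fst).matrix_elem i.1 j.1).mul
      ((continuous_subtype_val.comp continuous_snd).matrix_elem i.2 j.2))
  have hconj : Continuous fun p : Matrix.unitaryGroup (Fin m) ℂ ×
      Matrix.unitaryGroup (Fin n) ℂ => conjUV p.1 p.2 ρ :=
    (hW.matrix_conjTranspose.matrix_mul continuous_const).matrix_mul hW
  have hgcont : Continuous g := by
    refine Continuous.div_const (Continuous.sub ?_ continuous_const) 2
    exact continuous_finset_sum _ fun i _ => continuous_finset_sum _ fun j _ =>
      continuous_norm.comp (hconj.matrix_elem i j)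
  obtain ⟨p₀, -, hp₀⟩ := isCompact_univ.exists_isMinOn Set.univ_nonempty hgcont.continuousOn
  have hmin : ∀ p, g p₀ ≤ g p := fun p => hp₀ (Set.mem_univ p)
  have hbddV : ∀ U : Matrix.unitaryGroup (Fin m) ℂ,
      BddBelow (Set.range fun V : Matrix.unitaryGroup (Fin n) ℂ =>
        (l1Norm (conjUV U V ρ) - 1) / 2) := by
    intro U
    exact ⟨0, by rintro x ⟨V, rfl⟩; exact hnonneg (U, V)⟩
  have hbddU : BddBelow (Set.range fun U : Matrix.unitaryGroup (Fin m) ℂ =>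
      ⨅ V : Matrix.unitaryGroup (Fin n) ℂ, (l1Norm (conjUV U V ρ) - 1) / 2) := by
    refine ⟨0, ?_⟩
    rintro x ⟨U, rfl⟩
    exact le_ciInf fun V => hnonneg (U, V)
  have hQle : ∀ (U : Matrix.unitaryGroup (Fin m) ℂ) (V : Matrix.unitaryGroup (Fin n) ℂ),
      QNAB ρ ≤ g (U, V) := by
    intro U V
    refine le_trans (ciInf_le hbddU U) (ciInf_le (hbddV U) V)
  have hQge : g p₀ ≤ QNAB ρ :=
    le_ciInf fun U => le_ciInf fun V => hmin (U, V)
  have hQeq : QNAB ρ = g p₀ :=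
    le_antisymm (hQle p₀.1 p₀.2) hQge
  constructor
  · intro h0
    refine ⟨p₀.1, p₀.2, ?_⟩
    exact (hzero p₀.1 p₀.2).mp (by rw [← h0, hQeq])
  · rintro ⟨U, V, hz⟩
    have h0 : g (U, V) = 0 := (hzero U V).mpr hz
    have h1 : QNAB ρ ≤ 0 := h0 ▸ hQle U V
    have h2 : 0 ≤ QNAB ρ := le_trans (hnonneg p₀) hQge
    linarith
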